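/- arXiv:1902.04233 — 2 statements merged into one kernel-verified Lean document; each statement's English description precedes it below -/
import Mathlib

section
/- Let G = G₀(u) ⋄ H(u) be a connected non-odd-bipartite k-uniform hypergraph (k even) with H odd-bipartite. Then λ_min(G) ≤ k·ε(G₀)/ν(G), where ε(G₀) is the number of edges of G₀ and ν(G) the number of vertices of G. -/
open Finset

section Helpers
variable {V : Type} [DecidableEq V] [Fintype V]

/-- toggle membership of `v₀`. -/
def flipv (v₀ : V) (T : Finset V) : Finset V :=
  if v₀ ∈ T then T.erase v₀ else insert v₀ T

lemma flip_parity (e T : Finset V) (v₀ : V) (hv₀ : v₀ ∈ e) :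
    Odd ((e ∩ flipv v₀ T).card) ↔ ¬ Odd ((e ∩ T).card) := by
  unfold flipv
  by_cases h : v₀ ∈ T
  · have h1 : e ∩ T.erase v₀ = (e ∩ T).erase v₀ := by
      ext w; simp only [mem_erase, mem_inter]; tauto
    have h2 : v₀ ∈ e ∩ T := mem_inter.mpr ⟨hv₀, h⟩
    have h3 : 1 ≤ (e ∩ T).card := card_pos.mpr ⟨v₀, h2⟩
    rw [if_pos h, h1, card_erase_of_mem h2]
    simp only [Nat.odd_iff]
    omega
  · have h1 : e ∩ insert v₀ T = insert v₀ (e ∩ T) := by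
      ext w; simp only [mem_insert, mem_inter]
      constructor
      · rintro ⟨hw, rfl | hw2⟩
        · exact Or.inl rfl
        · exact Or.inr ⟨hw, hw2⟩
      · rintro (rfl | ⟨hw, hw2⟩)
        · exact ⟨hv₀, Or.inl rfl⟩
        · exact ⟨hw, Or.inr hw2⟩
    have h2 : v₀ ∉ e ∩ T := fun hm => h (mem_inter.mp hm).2
    rw [if_neg h, h1, card_insert_of_notMem h2]
    simp only [Nat.odd_iff]
    omega

lemma flip_invol (v₀ : V) (T : Finset V) : flipv v₀ (flipv v₀ T) = T := by
  unfold flipv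
  by_cases h : v₀ ∈ T
  · rw [if_pos h, if_neg (notMem_erase v₀ T), insert_erase h]
  · rw [if_neg h, if_pos (mem_insert_self v₀ T), erase_insert h]

/-- For a nonempty edge, exactly half of all vertex subsets meet it in an odd number. -/
lemma odd_half (e : Finset V) (he : e.Nonempty) :
    2 * ((univ.powerset.filter fun T : Finset V => Odd (e ∩ T).card)).card
      = 2 ^ Fintype.card V := by
  obtain ⟨v₀, hv₀⟩ := he
  have key : ((univ.powerset.filter fun T : Finset V => Odd (e ∩ T).card)).card =
      ((univ.powerset.filter fun T : Finset V => ¬ Odd (e ∩ T).card)).card := by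
    apply Finset.card_nbij' (flipv v₀) (flipv v₀)
    · intro T hT
      simp only [coe_filter, Set.mem_setOf_eq, mem_powerset] at hT ⊢
      exact ⟨subset_univ _, fun hodd => ((flip_parity e T v₀ hv₀).mp hodd) hT.2⟩
    · intro T hT
      simp only [coe_filter, Set.mem_setOf_eq, mem_powerset] at hT ⊢
      exact ⟨subset_univ _, (flip_parity e T v₀ hv₀).mpr hT.2⟩
    · intro T _; exact flip_invol v₀ T
    · intro T _; exact flip_invol v₀ T
  have total : ((univ.powerset.filter fun T : Finset V => Odd (e ∩ T).card)).card +
      ((univ.powerset.filter fun T : Finset V => ¬ Odd (e ∩ T).card)).card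
      = 2 ^ Fintype.card V := by
    rw [Finset.card_filter_add_card_filter_not, Finset.card_powerset, card_univ]
  omega

/-- There is a subset meeting at least half the edges oddly. -/
lemma exists_transversal (E : Finset (Finset V)) (hne : ∀ e ∈ E, e.Nonempty) :
    ∃ T : Finset V, E.card ≤ 2 * (E.filter fun e => Odd (e ∩ T).card).card := by
  by_contra hcon
  push_neg at hcon
  rcases E.eq_empty_or_nonempty with rfl | hEne
  · exact absurd (hcon ∅) (by simp)
  have hE1 : 1 ≤ E.card := card_pos.mpr hEne
  have hsum : 2 * ∑ T ∈ (univ : Finset V).powerset,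
      (E.filter fun e => Odd (e ∩ T).card).card = E.card * 2 ^ Fintype.card V := by
    have step1 : ∀ T : Finset V, ((E.filter fun e => Odd (e ∩ T).card).card : ℕ)
        = ∑ e ∈ E, (if Odd (e ∩ T).card then 1 else 0) := fun T => Finset.card_filter _ _
    calc 2 * ∑ T ∈ (univ : Finset V).powerset, (E.filter fun e => Odd (e ∩ T).card).card
        = 2 * ∑ T ∈ (univ : Finset V).powerset, ∑ e ∈ E, (if Odd (e ∩ T).card then 1 else 0) := by
          rw [Finset.sum_congr rfl fun T _ => step1 T]
      _ = 2 * ∑ e ∈ E, ∑ T ∈ (univ : Finset V).powerset, (if Odd (e ∩ T).card then 1 else 0) := by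
          rw [Finset.sum_comm]
      _ = ∑ e ∈ E, 2 * ((univ.powerset.filter fun T : Finset V => Odd (e ∩ T).card)).card := by
          rw [Finset.mul_sum]
          exact Finset.sum_congr rfl fun e _ => by rw [← Finset.card_filter]
      _ = ∑ e ∈ E, 2 ^ Fintype.card V :=
          Finset.sum_congr rfl fun e he => odd_half e (hne e he)
      _ = E.card * 2 ^ Fintype.card V := by rw [Finset.sum_const, smul_eq_mul]
  have hle : ∀ T ∈ (univ : Finset V).powerset,
      2 * (E.filter fun e => Odd (e ∩ T).card).card ≤ E.card - 1 := by
    intro T _; have := hcon T; omega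
  have h2 : 2 * ∑ T ∈ (univ : Finset V).powerset,
      (E.filter fun e => Odd (e ∩ T).card).card
        ≤ (E.card - 1) * 2 ^ Fintype.card V := by
    calc 2 * ∑ T ∈ (univ : Finset V).powerset, (E.filter fun e => Odd (e ∩ T).card).card
        = ∑ T ∈ (univ : Finset V).powerset, 2 * (E.filter fun e => Odd (e ∩ T).card).card := by
          rw [Finset.mul_sum]
      _ ≤ ∑ _T ∈ (univ : Finset V).powerset, (E.card - 1) := Finset.sum_le_sum hle
      _ = (E.card - 1) * 2 ^ Fintype.card V := by
          rw [Finset.sum_const, Finset.card_powerset, card_univ, smul_eq_mul, mul_comm]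
  rw [hsum] at h2
  have hpow : 0 < 2 ^ Fintype.card V := Nat.two_pow_pos _
  have := Nat.le_of_mul_le_mul_right
    (by omega : E.card * 2 ^ Fintype.card V ≤ (E.card - 1) * 2 ^ Fintype.card V) hpow
  omega

omit [Fintype V] in
lemma prod_sign (e S : Finset V) :
    ∏ v ∈ e, (if v ∈ S then (-1 : ℝ) else 1) = (-1) ^ (e ∩ S).card := by
  rw [← Finset.prod_filter_mul_prod_filter_not e (· ∈ S)]
  rw [Finset.prod_congr rfl (fun v hv => if_pos (mem_filter.mp hv).2),
      Finset.prod_congr rfl (fun v hv => if_neg (mem_filter.mp hv).2)]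
  rw [Finset.prod_const, Finset.prod_const, one_pow, mul_one, Finset.filter_mem_eq_inter]

/-- coordinate projection as a continuous linear map. -/
noncomputable def prj (v : V) : (V → ℝ) →L[ℝ] ℝ :=
  ContinuousLinearMap.proj (R := ℝ) (φ := fun _ : V => ℝ) v

omit [DecidableEq V] in
lemma prj_strict (v : V) (x : V → ℝ) (m : ℕ) :
    HasStrictFDerivAt (fun x : V → ℝ => x v ^ m) ((m * x v ^ (m - 1)) • prj v) x :=
  (hasStrictDerivAt_pow m (x v)).comp_hasStrictFDerivAt x (prj v).hasStrictFDerivAt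

end Helpers

structure UHG (V : Type) [DecidableEq V] [Fintype V] (k : ℕ) where
  edges : Finset (Finset V)
  uniform : ∀ e ∈ edges, e.card = k

namespace UHG

variable {V : Type} [DecidableEq V] [Fintype V] {k : ℕ}

/-- The vertices of the hypergraph: all vertices covered by some edge. -/
def verts (G : UHG V k) : Finset V := G.edges.biUnion id

/-- The set of edges containing a given vertex. -/
def incEdges (G : UHG V k) (v : V) : Finset (Finset V) :=
  G.edges.filter fun e => v ∈ e

/-- The degree of a vertex. -/
def deg (G : UHG V k) (v : V) : ℕ := (G.incEdges v).card

/-- Two vertices are adjacent if some edge contains both. -/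
def Adj (G : UHG V k) (u v : V) : Prop := ∃ e ∈ G.edges, u ∈ e ∧ v ∈ e

/-- A hypergraph is connected if any two of its vertices are joined by a walk. -/
def Connected (G : UHG V k) : Prop :=
  G.verts.Nonempty ∧ ∀ u ∈ G.verts, ∀ v ∈ G.verts, Relation.ReflTransGen G.Adj u v

/-- A hypergraph is odd-bipartite if there is a set `U` of vertices such that
every edge meets `U` in an odd number of vertices (the bipartition is `{U, V \ U}`). -/
def OddBipartite (G : UHG V k) : Prop :=
  ∃ U : Finset V, ∀ e ∈ G.edges, Odd (e ∩ U).card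

/-- The signless Laplacian form `Q(G) x^k = ∑_{e ∈ E} (∑_{v∈e} x_v^k + k ∏_{v∈e} x_v)`. -/
def Qform (G : UHG V k) (x : V → ℝ) : ℝ :=
  ∑ e ∈ G.edges, ((∑ v ∈ e, x v ^ k) + (k : ℝ) * ∏ v ∈ e, x v)

/-- The H-eigenvector equation for the signless Laplacian tensor:
`(λ - d(v)) x_v^{k-1} = ∑_{e ∋ v} ∏_{w ∈ e \ {v}} x_w` for every vertex `v`. -/
def eigenEq (G : UHG V k) (lam : ℝ) (x : V → ℝ) : Prop :=
  ∀ v : V, (lam - (G.deg v : ℝ)) * x v ^ (k - 1) =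
    ∑ e ∈ G.incEdges v, ∏ w ∈ e.erase v, x w

/-- The least H-eigenvalue of the signless Laplacian tensor. -/
noncomputable def lamMin (G : UHG V k) : ℝ :=
  sInf {lam : ℝ | ∃ x : V → ℝ, x ≠ 0 ∧ G.eigenEq lam x}

/-- A first eigenvector: an H-eigenvector associated with the least H-eigenvalue. -/
def IsFirstEigenvector (G : UHG V k) (x : V → ℝ) : Prop :=
  x ≠ 0 ∧ G.eigenEq G.lamMin x

/-- `G` is the coalescence `G₀(u) ⋄ H(u)`: its edges are the disjoint union of the
edges of `G₀` and `H`, which share only the vertex `u`. -/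
def IsCoalescence (G G₀ H : UHG V k) (u : V) : Prop :=
  G.edges = G₀.edges ∪ H.edges ∧ Disjoint G₀.edges H.edges ∧
  G₀.verts ∩ H.verts ⊆ {u} ∧ u ∈ G₀.verts ∧ u ∈ H.verts

end UHG

section MainAux
variable {V : Type} [DecidableEq V] [Fintype V] {k : ℕ}

/-- The minimum of Qform over the `k`-sphere of radius `c` is an eigenvalue. -/
lemma exists_eigen (hk : Even k) (hk0 : 0 < k) (G : UHG V k) (c : ℝ) (hc : 0 < c)
    (y : V → ℝ) (hy : ∑ v, y v ^ k = c) :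
    ∃ lam : ℝ, (∃ x : V → ℝ, x ≠ 0 ∧ G.eigenEq lam x) ∧ lam * c ≤ G.Qform y := by
  classical
  set Sset : Set (V → ℝ) := {x | ∑ v, x v ^ k = c} with hSset
  have hyS : y ∈ Sset := hy
  have hgcont : Continuous (fun x : V → ℝ => ∑ v, x v ^ k) :=
    continuous_finset_sum _ fun v _ => (continuous_apply v).pow k
  have hclosed : IsClosed Sset := isClosed_eq hgcont continuous_const
  have hbdd : Bornology.IsBounded Sset := by
    rw [isBounded_iff_forall_norm_le]
    refine ⟨max 1 c, fun x hx => ?_⟩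
    rw [pi_norm_le_iff_of_nonneg (le_max_of_le_left zero_le_one)]
    intro v
    by_contra hgt
    push_neg at hgt
    have h1 : (1:ℝ) ≤ |x v| := le_of_lt (lt_of_le_of_lt (le_max_left 1 c) hgt)
    have h2 : |x v| ≤ |x v| ^ k := le_self_pow₀ h1 hk0.ne'
    have h3 : |x v| ^ k = x v ^ k := Even.pow_abs hk (x v)
    have h4 : x v ^ k ≤ c := by
      rw [← hx]
      exact Finset.single_le_sum (f := fun v => x v ^ k)
        (fun w _ => Even.pow_nonneg hk (x w)) (mem_univ v)
    have : |x v| ≤ c := le_trans h2 (h3 ▸ h4)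
    exact absurd (lt_of_le_of_lt (le_max_right 1 c) hgt) (not_lt.mpr this)
  have hcompact : IsCompact Sset := Metric.isCompact_of_isClosed_isBounded hclosed hbdd
  have hQcont : Continuous G.Qform := by
    apply continuous_finset_sum
    intro e _
    exact (continuous_finset_sum _ fun v _ => (continuous_apply v).pow k).add
      (continuous_const.mul (continuous_finset_prod _ fun v _ => continuous_apply v))
  obtain ⟨x₀, hx₀S, hmin⟩ := hcompact.exists_isMinOn ⟨y, hyS⟩ hQcont.continuousOn
  have hgx₀ : ∑ v, x₀ v ^ k = c := hx₀S
  -- derivatives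
  set g' : (V → ℝ) →L[ℝ] ℝ := ∑ v, ((k : ℝ) * x₀ v ^ (k - 1)) • prj v with hg'def
  have hg' : HasStrictFDerivAt (fun x : V → ℝ => ∑ v, x v ^ k) g' x₀ :=
    HasStrictFDerivAt.fun_sum fun v _ => prj_strict v x₀ k
  set f' : (V → ℝ) →L[ℝ] ℝ := ∑ e ∈ G.edges,
      ((∑ v ∈ e, ((k : ℝ) * x₀ v ^ (k - 1)) • prj v)
        + (k : ℝ) • ∑ v ∈ e, (∏ w ∈ e.erase v, x₀ w) • prj v) with hf'def
  have hf' : HasStrictFDerivAt G.Qform f' x₀ := by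
    apply HasStrictFDerivAt.fun_sum
    intro e _
    exact (HasStrictFDerivAt.fun_sum fun v _ => prj_strict v x₀ k).add
      ((HasStrictFDerivAt.finset_prod fun v _ =>
        (prj v).hasStrictFDerivAt).const_smul (k : ℝ))
  have hextr : IsLocalExtrOn G.Qform
      {x : V → ℝ | (∑ v, x v ^ k) = (∑ v, x₀ v ^ k)} x₀ := by
    have hset : {x : V → ℝ | (∑ v, x v ^ k) = (∑ v, x₀ v ^ k)} = Sset := by
      ext x; simp only [Set.mem_setOf_eq, hSset, hgx₀]
    rw [hset]
    exact Or.inl hmin.localize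
  obtain ⟨a, b, hab, heq⟩ := hextr.exists_multipliers_of_hasStrictFDerivAt_1d hg' hf'
  have hz : ∀ z : V → ℝ, a * g' z + b * f' z = 0 := by
    intro z
    have := ContinuousLinearMap.ext_iff.mp heq z
    simpa [ContinuousLinearMap.add_apply, ContinuousLinearMap.smul_apply, smul_eq_mul] using this
  have hpowmul : ∀ t : ℝ, t ^ (k - 1) * t = t ^ k := by
    intro t
    conv_rhs => rw [show k = (k - 1) + 1 by omega]
    rw [pow_succ]
  -- evaluation of g'
  have hg'app : ∀ z : V → ℝ, g' z = ∑ v, ((k : ℝ) * x₀ v ^ (k - 1)) * z v := by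
    intro z
    simp [hg'def, ContinuousLinearMap.sum_apply, ContinuousLinearMap.smul_apply,
      prj, ContinuousLinearMap.proj_apply, smul_eq_mul]
  have hf'app : ∀ z : V → ℝ, f' z = ∑ e ∈ G.edges,
      ((∑ v ∈ e, ((k : ℝ) * x₀ v ^ (k - 1)) * z v)
        + (k : ℝ) * ∑ v ∈ e, (∏ w ∈ e.erase v, x₀ w) * z v) := by
    intro z
    simp [hf'def, ContinuousLinearMap.sum_apply, ContinuousLinearMap.add_apply,
      ContinuousLinearMap.smul_apply, prj, ContinuousLinearMap.proj_apply, smul_eq_mul]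
  have hg'x₀ : g' x₀ = (k : ℝ) * c := by
    rw [hg'app, ← hgx₀, Finset.mul_sum]
    refine Finset.sum_congr rfl fun v _ => ?_
    rw [mul_assoc, hpowmul]
  have hb : b ≠ 0 := by
    intro hb0
    have h0 := hz x₀
    rw [hb0, zero_mul, add_zero, hg'x₀] at h0
    have ha : a = 0 := by
      have hkc : (k : ℝ) * c ≠ 0 := by positivity
      exact (mul_eq_zero.mp h0).resolve_right hkc
    exact hab (by simp [ha, hb0, Prod.ext_iff])
  set lam : ℝ := -a / b with hlam
  -- the eigen equation
  have hsingle : ∀ (v : V) (cc : V → ℝ), ∑ w, cc w * (Pi.single v (1:ℝ) : V → ℝ) w = cc v := by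
    intro v cc
    rw [Finset.sum_eq_single v]
    · simp
    · intro w _ hw; simp [Pi.single_apply, hw]
    · intro h; exact absurd (mem_univ v) h
  have hsingle_e : ∀ (v : V) (e : Finset V) (cc : V → ℝ),
      ∑ w ∈ e, cc w * (Pi.single v (1:ℝ) : V → ℝ) w = if v ∈ e then cc v else 0 := by
    intro v e cc
    by_cases hv : v ∈ e
    · rw [Finset.sum_eq_single v]
      · simp [hv]
      · intro w _ hw; simp [Pi.single_apply, hw]
      · intro h; exact absurd hv h
    · rw [if_neg hv]
      apply Finset.sum_eq_zero
      intro w hw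
      have : w ≠ v := fun h => hv (h ▸ hw)
      simp [Pi.single_apply, this]
  have heig : G.eigenEq lam x₀ := by
    intro v
    have h1 := hz (Pi.single v (1:ℝ) : V → ℝ)
    rw [hg'app, hf'app] at h1
    rw [hsingle v (fun w => (k : ℝ) * x₀ w ^ (k - 1))] at h1
    have h2 : ∀ e ∈ G.edges,
        ((∑ w ∈ e, ((k : ℝ) * x₀ w ^ (k - 1)) * (Pi.single v (1:ℝ) : V → ℝ) w)
          + (k : ℝ) * ∑ w ∈ e, (∏ z ∈ e.erase w, x₀ z) * (Pi.single v (1:ℝ) : V → ℝ) w)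
        = (if v ∈ e then ((k : ℝ) * x₀ v ^ (k - 1)) else 0)
          + (k : ℝ) * (if v ∈ e then (∏ z ∈ e.erase v, x₀ z) else 0) := by
      intro e _
      rw [hsingle_e v e (fun w => (k : ℝ) * x₀ w ^ (k - 1)),
        hsingle_e v e (fun w => ∏ z ∈ e.erase w, x₀ z)]
    rw [Finset.sum_congr rfl h2, Finset.sum_add_distrib, ← Finset.mul_sum,
      ← Finset.sum_filter, ← Finset.sum_filter] at h1
    have hfilt : G.edges.filter (fun e => v ∈ e) = G.incEdges v := rfl
    rw [hfilt] at h1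
    rw [Finset.sum_const] at h1
    -- h1 : a * (k * x₀ v ^ (k-1)) + b * ((deg v) • (k * x₀ v ^ (k-1)) + k * ∑ ...) = 0
    have hdeg : ((G.incEdges v).card : ℝ) = (G.deg v : ℝ) := by rfl
    rw [nsmul_eq_mul, hdeg] at h1
    have hkne : (k : ℝ) ≠ 0 := Nat.cast_ne_zero.mpr hk0.ne'
    set P := x₀ v ^ (k - 1) with hP
    set SP := ∑ e ∈ G.incEdges v, ∏ z ∈ e.erase v, x₀ z with hSP
    have h4 : (k : ℝ) * (a * P + b * (G.deg v : ℝ) * P + b * SP) = 0 := by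
      linear_combination h1
    have h3 : a * P + b * (G.deg v : ℝ) * P + b * SP = 0 :=
      (mul_eq_zero.mp h4).resolve_left hkne
    have hblam : b * lam = -a := by rw [hlam]; field_simp
    have hgoal : b * ((lam - (G.deg v : ℝ)) * P) = b * SP := by
      have hre : b * ((lam - (G.deg v : ℝ)) * P) = (b * lam) * P - b * (G.deg v : ℝ) * P := by
        ring
      rw [hre, hblam]; linarith [h3]
    exact mul_left_cancel₀ hb hgoal
  have hx₀ne : x₀ ≠ 0 := by
    intro h0
    rw [h0] at hgx₀
    simp only [Pi.zero_apply, zero_pow hk0.ne', Finset.sum_const_zero] at hgx₀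
    exact absurd hgx₀.symm (ne_of_gt hc)
  -- the eigenvalue identity lam * c = Qform x₀
  have hid : lam * c = G.Qform x₀ := by
    have hA : ∀ v, (lam - (G.deg v : ℝ)) * x₀ v ^ k
        = x₀ v * ∑ e ∈ G.incEdges v, ∏ w ∈ e.erase v, x₀ w := by
      intro v
      rw [← hpowmul (x₀ v), show (lam - (G.deg v : ℝ)) * (x₀ v ^ (k - 1) * x₀ v)
          = ((lam - (G.deg v : ℝ)) * x₀ v ^ (k - 1)) * x₀ v from by ring, heig v]
      ring
    have hsumA : ∑ v, (lam - (G.deg v : ℝ)) * x₀ v ^ k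
        = ∑ v, x₀ v * ∑ e ∈ G.incEdges v, ∏ w ∈ e.erase v, x₀ w :=
      Finset.sum_congr rfl fun v _ => hA v
    have h5 : ∑ v, (lam - (G.deg v : ℝ)) * x₀ v ^ k
        = lam * (∑ v, x₀ v ^ k) - ∑ v, (G.deg v : ℝ) * x₀ v ^ k := by
      rw [Finset.mul_sum, ← Finset.sum_sub_distrib]
      exact Finset.sum_congr rfl fun v _ => by ring
    have h6 : ∑ v, (G.deg v : ℝ) * x₀ v ^ k = ∑ e ∈ G.edges, ∑ v ∈ e, x₀ v ^ k := by
      have h7 : ∀ v, (G.deg v : ℝ) * x₀ v ^ k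
          = ∑ e ∈ G.edges, (if v ∈ e then x₀ v ^ k else 0) := by
        intro v
        rw [← Finset.sum_filter]
        have hfe : G.edges.filter (fun e => v ∈ e) = G.incEdges v := rfl
        rw [hfe, Finset.sum_const, nsmul_eq_mul]
        rfl
      rw [Finset.sum_congr rfl fun v _ => h7 v, Finset.sum_comm]
      refine Finset.sum_congr rfl fun e _ => ?_
      rw [Finset.sum_ite_mem, Finset.univ_inter]
    have h8 : ∀ v, x₀ v * ∑ e ∈ G.incEdges v, ∏ w ∈ e.erase v, x₀ w
        = ∑ e ∈ G.edges, (if v ∈ e then x₀ v * ∏ w ∈ e.erase v, x₀ w else 0) := by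
      intro v
      rw [Finset.mul_sum, ← Finset.sum_filter]
      rfl
    have hRHS : ∑ v, x₀ v * ∑ e ∈ G.incEdges v, ∏ w ∈ e.erase v, x₀ w
        = ∑ e ∈ G.edges, (k : ℝ) * ∏ w ∈ e, x₀ w := by
      rw [Finset.sum_congr rfl fun v _ => h8 v, Finset.sum_comm]
      refine Finset.sum_congr rfl fun e he => ?_
      rw [Finset.sum_ite_mem, Finset.univ_inter]
      rw [Finset.sum_congr rfl fun v hv => Finset.mul_prod_erase e x₀ hv,
        Finset.sum_const, nsmul_eq_mul, G.uniform e he]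
    rw [h5, hgx₀, hRHS] at hsumA
    rw [h6] at hsumA
    have hQ : G.Qform x₀ = (∑ e ∈ G.edges, ∑ v ∈ e, x₀ v ^ k)
        + ∑ e ∈ G.edges, (k : ℝ) * ∏ w ∈ e, x₀ w := by
      rw [UHG.Qform, Finset.sum_add_distrib]
    rw [hQ]
    linarith [hsumA]
  refine ⟨lam, ⟨x₀, hx₀ne, heig⟩, ?_⟩
  rw [hid]
  exact hmin hyS

end MainAux

/-- Let `G = G₀(u) ⋄ H(u)` be a connected non-odd-bipartite `k`-uniform
hypergraph (`k` even) with `H` odd-bipartite. Then `λ_min(G) ≤ k ε(G₀) / ν(G)`. -/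
theorem stmt15 {V : Type} [DecidableEq V] [Fintype V] {k : ℕ}
    (hk : Even k) (hk0 : 0 < k) (G G₀ H : UHG V k) (u : V)
    (hcoal : UHG.IsCoalescence G G₀ H u) (hH : H.OddBipartite)
    (hconn : G.Connected) (hnob : ¬ G.OddBipartite) :
    G.lamMin ≤ (k : ℝ) * G₀.edges.card / G.verts.card := by
  classical
  obtain ⟨hedges, hdisj, hiu, huG₀, huH⟩ := hcoal
  obtain ⟨U, hU⟩ := hH
  have hedgesub : ∀ (G' : UHG V k) (e : Finset V), e ∈ G'.edges → e ⊆ G'.verts := by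
    intro G' e he v hv
    exact Finset.mem_biUnion.mpr ⟨e, he, hv⟩
  have hsubG₀ : G₀.verts ⊆ G.verts := by
    intro v hv
    obtain ⟨e, he, hve⟩ := Finset.mem_biUnion.mp hv
    exact Finset.mem_biUnion.mpr ⟨e, by rw [hedges]; exact Finset.mem_union_left _ he, hve⟩
  have hsubH : H.verts ⊆ G.verts := by
    intro v hv
    obtain ⟨e, he, hve⟩ := Finset.mem_biUnion.mp hv
    exact Finset.mem_biUnion.mpr ⟨e, by rw [hedges]; exact Finset.mem_union_right _ he, hve⟩
  obtain ⟨T₀, hT₀⟩ := exists_transversal G₀.edges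
    (fun e he => Finset.card_pos.mp (by rw [G₀.uniform e he]; exact hk0))
  obtain ⟨T, hTu, hTcount⟩ : ∃ T : Finset V, ((u ∈ T) ↔ (u ∈ U)) ∧
      G₀.edges.card ≤ 2 * (G₀.edges.filter fun e => Odd (e ∩ T).card).card := by
    by_cases hmem : (u ∈ T₀) ↔ (u ∈ U)
    · exact ⟨T₀, hmem, hT₀⟩
    · refine ⟨T₀ᶜ, ?_, ?_⟩
      · simp only [Finset.mem_compl]; tauto
      · have hcongr : ∀ e ∈ G₀.edges, Odd (e ∩ T₀ᶜ).card ↔ Odd (e ∩ T₀).card := by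
          intro e he
          have hcd : (e ∩ T₀).card + (e \ T₀).card = e.card :=
            Finset.card_inter_add_card_sdiff e T₀
          have hcc : e ∩ T₀ᶜ = e \ T₀ := by
            ext w
            simp [Finset.mem_compl, Finset.mem_sdiff, Finset.mem_inter]
          have hek : e.card = k := G₀.uniform e he
          obtain ⟨m, hm⟩ := hk
          rw [hcc]
          simp only [Nat.odd_iff] at *
          omega
        rw [Finset.filter_congr hcongr]
        exact hT₀
  set S : Finset V := (U ∩ H.verts) ∪ (T \ H.verts) with hSdef
  set y : V → ℝ := fun v => if v ∈ G.verts then (if v ∈ S then -1 else 1) else 0 with hydef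
  have hn : (0:ℝ) < G.verts.card := by
    exact_mod_cast Finset.card_pos.mpr hconn.1
  have hyval : ∀ v ∈ G.verts, y v = 1 ∨ y v = -1 := by
    intro v hv
    simp only [hydef, if_pos hv]
    by_cases h : v ∈ S <;> simp [h]
  have hsumpow : ∀ e ∈ G.edges, ∑ v ∈ e, y v ^ k = (k : ℝ) := by
    intro e he
    have hsub := hedgesub G e he
    have hterm : ∀ v ∈ e, y v ^ k = (1:ℝ) := by
      intro v hv
      rcases hyval v (hsub hv) with h | h
      · rw [h, one_pow]
      · rw [h, hk.neg_one_pow]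
    rw [Finset.sum_congr rfl hterm, Finset.sum_const, G.uniform e he, nsmul_eq_mul, mul_one]
  have hprodH : ∀ e ∈ H.edges, ∏ v ∈ e, y v = -1 := by
    intro e he
    have hsub := hedgesub H e he
    have hterm : ∀ v ∈ e, y v = if v ∈ U then -1 else 1 := by
      intro v hv
      have hvH : v ∈ H.verts := hsub hv
      have hvG : v ∈ G.verts := hsubH hvH
      have hvS : v ∈ S ↔ v ∈ U := by
        simp only [hSdef, Finset.mem_union, Finset.mem_inter, Finset.mem_sdiff]
        tauto
      simp only [hydef, if_pos hvG]
      by_cases h : v ∈ U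
      · rw [if_pos (hvS.mpr h), if_pos h]
      · rw [if_neg (fun hs => h (hvS.mp hs)), if_neg h]
    rw [Finset.prod_congr rfl hterm, prod_sign]
    exact Odd.neg_one_pow (hU e he)
  have hprodG₀ : ∀ e ∈ G₀.edges, ∏ v ∈ e, y v = (-1) ^ (e ∩ T).card := by
    intro e he
    have hsub := hedgesub G₀ e he
    have hterm : ∀ v ∈ e, y v = if v ∈ T then -1 else 1 := by
      intro v hv
      have hvG₀ : v ∈ G₀.verts := hsub hv
      have hvG : v ∈ G.verts := hsubG₀ hvG₀
      have hvS : v ∈ S ↔ v ∈ T := by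
        by_cases hvH : v ∈ H.verts
        · have hvu : v = u :=
            Finset.mem_singleton.mp (hiu (Finset.mem_inter.mpr ⟨hvG₀, hvH⟩))
          subst hvu
          simp only [hSdef, Finset.mem_union, Finset.mem_inter, Finset.mem_sdiff]
          constructor
          · rintro (⟨h1, _⟩ | ⟨h1, _⟩)
            · exact hTu.mpr h1
            · exact h1
          · intro h1
            exact Or.inl ⟨hTu.mp h1, hvH⟩
        · simp only [hSdef, Finset.mem_union, Finset.mem_inter, Finset.mem_sdiff]
          tauto
      simp only [hydef, if_pos hvG]
      by_cases h : v ∈ T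
      · rw [if_pos (hvS.mpr h), if_pos h]
      · rw [if_neg (fun hs => h (hvS.mp hs)), if_neg h]
    rw [Finset.prod_congr rfl hterm, prod_sign]
  have hQy_eq : G.Qform y = ∑ e ∈ G₀.edges,
      (if Odd (e ∩ T).card then (0:ℝ) else 2 * k) := by
    rw [UHG.Qform, hedges, Finset.sum_union hdisj]
    have hH0 : ∑ e ∈ H.edges, ((∑ v ∈ e, y v ^ k) + (k:ℝ) * ∏ v ∈ e, y v) = 0 := by
      apply Finset.sum_eq_zero
      intro e he
      rw [hsumpow e (by rw [hedges]; exact Finset.mem_union_right _ he), hprodH e he]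
      ring
    rw [hH0, add_zero]
    refine Finset.sum_congr rfl fun e he => ?_
    rw [hsumpow e (by rw [hedges]; exact Finset.mem_union_left _ he), hprodG₀ e he]
    by_cases hodd : Odd (e ∩ T).card
    · rw [if_pos hodd, Odd.neg_one_pow hodd]; ring
    · rw [if_neg hodd, Even.neg_one_pow (Nat.not_odd_iff_even.mp hodd)]; ring
  have hQy : G.Qform y ≤ (k:ℝ) * G₀.edges.card := by
    rw [hQy_eq, Finset.sum_ite, Finset.sum_const_zero, zero_add, Finset.sum_const,
      nsmul_eq_mul]
    set c1 := (G₀.edges.filter fun e => Odd (e ∩ T).card).card with hc1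
    have hcadd := Finset.card_filter_add_card_filter_not
      (s := G₀.edges) (p := fun e => Odd (e ∩ T).card)
    have hcle : (G₀.edges.filter fun e => ¬ Odd (e ∩ T).card).card
        = G₀.edges.card - c1 := by omega
    rw [hcle]
    have hnat : (G₀.edges.card - c1) * (2 * k) ≤ k * G₀.edges.card := by
      have h2 : 2 * (G₀.edges.card - c1) ≤ G₀.edges.card := by omega
      calc (G₀.edges.card - c1) * (2 * k) = (2 * (G₀.edges.card - c1)) * k := by ring
        _ ≤ G₀.edges.card * k := Nat.mul_le_mul_right _ h2
        _ = k * G₀.edges.card := Nat.mul_comm _ _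
    calc ((G₀.edges.card - c1 : ℕ) : ℝ) * (2 * (k:ℝ))
        = (((G₀.edges.card - c1) * (2 * k) : ℕ) : ℝ) := by push_cast; ring
      _ ≤ ((k * G₀.edges.card : ℕ) : ℝ) := by exact_mod_cast hnat
      _ = (k:ℝ) * G₀.edges.card := by push_cast; ring
  have hgy : ∑ v, y v ^ k = (G.verts.card : ℝ) := by
    have hterm : ∀ v : V, y v ^ k = if v ∈ G.verts then (1:ℝ) else 0 := by
      intro v
      by_cases hv : v ∈ G.verts
      · rw [if_pos hv]
        rcases hyval v hv with h | h
        · rw [h, one_pow]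
        · rw [h, hk.neg_one_pow]
      · rw [if_neg hv]
        simp only [hydef, if_neg hv]
        exact zero_pow hk0.ne'
    rw [Finset.sum_congr rfl fun v _ => hterm v, Finset.sum_ite_mem, Finset.univ_inter,
      Finset.sum_const, nsmul_eq_mul, mul_one]
  obtain ⟨lam, hmem, hlam⟩ := exists_eigen hk hk0 G (G.verts.card : ℝ) hn y hgy
  rw [UHG.lamMin]
  by_cases hbb : BddBelow {lam : ℝ | ∃ x : V → ℝ, x ≠ 0 ∧ G.eigenEq lam x}
  · refine le_trans (csInf_le hbb hmem) ?_
    rw [le_div_iff₀ hn]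
    exact le_trans hlam (le_trans hQy (le_refl _))
  · rw [Real.sInf_of_not_bddBelow hbb]
    positivity
end

section
/- Let G = G₀(u) ⋄ H(u) be a connected non-odd-bipartite k-uniform hypergraph (k even) with H odd-bipartite. Then λ_min(G) ≤ d_{G₀}(u)/ν(H), where d_{G₀}(u) is the degree of u in G₀ and ν(H) the number of vertices of H. -/
open Finset

/-! ### Auxiliary development for `stmt16` -/

section Stmt16Aux

open ContinuousLinearMap

set_option linter.unusedSectionVars false

variable {V : Type} [DecidableEq V] [Fintype V] {k : ℕ}

lemma hasStrict_coord (v : V) (x : V → ℝ) :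
    HasStrictFDerivAt (fun y : V → ℝ => y v)
      (ContinuousLinearMap.proj (R := ℝ) (φ := fun _ : V => ℝ) v) x :=
  (ContinuousLinearMap.proj (R := ℝ) (φ := fun _ : V => ℝ) v).hasStrictFDerivAt

/-- derivative of a coordinate power -/
lemma hasStrict_pow (v : V) (x : V → ℝ) (k : ℕ) :
    HasStrictFDerivAt (fun y : V → ℝ => y v ^ k)
      (((k : ℝ) * x v ^ (k - 1)) • ContinuousLinearMap.proj (R := ℝ) (φ := fun _ : V => ℝ) v) x := by
  have h := HasStrictFDerivAt.finset_prod (u := Finset.range k)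
    (g := fun _ : ℕ => fun y : V → ℝ => y v)
    (g' := fun _ : ℕ => ContinuousLinearMap.proj (R := ℝ) (φ := fun _ : V => ℝ) v)
    (x := x) (fun i _ => hasStrict_coord v x)
  have hfun : (fun y : V → ℝ => ∏ _i ∈ Finset.range k, y v) = fun y : V → ℝ => y v ^ k := by
    funext y; simp [Finset.prod_const]
  have hder : (∑ i ∈ Finset.range k,
      (∏ j ∈ (Finset.range k).erase i, x v) • ContinuousLinearMap.proj (R := ℝ) (φ := fun _ : V => ℝ) v)
      = ((k : ℝ) * x v ^ (k - 1)) • ContinuousLinearMap.proj (R := ℝ) (φ := fun _ : V => ℝ) v := by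
    ext y
    simp only [ContinuousLinearMap.sum_apply, ContinuousLinearMap.smul_apply, proj_apply,
      smul_eq_mul]
    rw [Finset.sum_congr rfl (fun i hi => by
      rw [Finset.prod_const, Finset.card_erase_of_mem hi, Finset.card_range])]
    rw [Finset.sum_const, Finset.card_range, nsmul_eq_mul]
    ring
  rw [hfun, hder] at h
  exact h

/-- The derivative of the signless Laplacian form. -/
noncomputable def QD (G : UHG V k) (x : V → ℝ) : (V → ℝ) →L[ℝ] ℝ :=
  ∑ e ∈ G.edges, ((∑ v ∈ e, ((k : ℝ) * x v ^ (k - 1)) • ContinuousLinearMap.proj v)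
    + (k : ℝ) • ∑ v ∈ e, (∏ w ∈ e.erase v, x w) • ContinuousLinearMap.proj v)

/-- The derivative of the constraint `x ↦ ∑ v, x v ^ k`. -/
noncomputable def gD (k : ℕ) (x : V → ℝ) : (V → ℝ) →L[ℝ] ℝ :=
  ∑ v : V, ((k : ℝ) * x v ^ (k - 1)) • ContinuousLinearMap.proj v

lemma hasStrict_g (x : V → ℝ) :
    HasStrictFDerivAt (fun y : V → ℝ => ∑ v, y v ^ k) (gD k x) x :=
  HasStrictFDerivAt.fun_sum fun v _ => hasStrict_pow v x k

lemma hasStrict_Q (G : UHG V k) (x : V → ℝ) :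
    HasStrictFDerivAt G.Qform (QD G x) x := by
  unfold UHG.Qform QD
  exact HasStrictFDerivAt.fun_sum fun e _ =>
    (HasStrictFDerivAt.fun_sum fun v _ => hasStrict_pow v x k).add
      ((HasStrictFDerivAt.finset_prod fun v _ => hasStrict_coord v x).const_mul _)

lemma QD_apply (G : UHG V k) (x y : V → ℝ) :
    QD G x y = ∑ e ∈ G.edges, ((∑ v ∈ e, (k : ℝ) * x v ^ (k - 1) * y v)
      + (k : ℝ) * ∑ v ∈ e, (∏ w ∈ e.erase v, x w) * y v) := by
  unfold QD
  simp [ContinuousLinearMap.sum_apply, Finset.mul_sum]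

lemma gD_apply (x y : V → ℝ) :
    gD k x y = ∑ v : V, (k : ℝ) * x v ^ (k - 1) * y v := by
  unfold gD
  simp [ContinuousLinearMap.sum_apply]

lemma sum_single_mul (e : Finset V) (c : V → ℝ) (w : V) :
    ∑ v ∈ e, c v * (Pi.single w (1 : ℝ) : V → ℝ) v = if w ∈ e then c w else 0 := by
  split_ifs with hw
  · rw [Finset.sum_eq_single_of_mem w hw (fun v hv hne => by
      simp [Pi.single_eq_of_ne hne])]
    simp
  · refine Finset.sum_eq_zero fun v hv => ?_
    have hne : v ≠ w := fun h => hw (h ▸ hv)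
    simp [Pi.single_eq_of_ne hne]

lemma QD_single (G : UHG V k) (x : V → ℝ) (w : V) :
    QD G x (Pi.single w 1) = (k : ℝ) * (((G.deg w : ℝ)) * x w ^ (k - 1)
      + ∑ e ∈ G.incEdges w, ∏ v ∈ e.erase w, x v) := by
  rw [QD_apply]
  have step : ∀ e ∈ G.edges,
      ((∑ v ∈ e, (k : ℝ) * x v ^ (k - 1) * (Pi.single w (1:ℝ) : V → ℝ) v)
        + (k : ℝ) * ∑ v ∈ e, (∏ w' ∈ e.erase v, x w') * (Pi.single w (1:ℝ) : V → ℝ) v)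
      = if w ∈ e then ((k : ℝ) * x w ^ (k - 1) + (k : ℝ) * ∏ v ∈ e.erase w, x v) else 0 := by
    intro e _
    rw [sum_single_mul e (fun v => (k : ℝ) * x v ^ (k - 1)) w,
      sum_single_mul e (fun v => ∏ w' ∈ e.erase v, x w') w]
    split_ifs with hw <;> ring
  rw [Finset.sum_congr rfl step, ← Finset.sum_filter]
  have : G.edges.filter (fun e => w ∈ e) = G.incEdges w := rfl
  rw [this, Finset.sum_add_distrib, Finset.sum_const, ← Finset.mul_sum, nsmul_eq_mul]
  have hdeg : ((G.incEdges w).card : ℝ) = (G.deg w : ℝ) := rfl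
  rw [hdeg]; ring

lemma gD_single (x : V → ℝ) (w : V) :
    gD k x (Pi.single w 1) = (k : ℝ) * x w ^ (k - 1) := by
  rw [gD_apply, sum_single_mul Finset.univ (fun v => (k : ℝ) * x v ^ (k - 1)) w]
  simp

lemma QD_self (G : UHG V k) (hk0 : 0 < k) (x : V → ℝ) :
    QD G x x = (k : ℝ) * G.Qform x := by
  rw [QD_apply]
  unfold UHG.Qform
  rw [Finset.mul_sum]
  refine Finset.sum_congr rfl fun e he => ?_
  have h1 : ∀ v ∈ e, (k : ℝ) * x v ^ (k - 1) * x v = (k : ℝ) * x v ^ k := by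
    intro v _
    rw [mul_assoc, ← pow_succ, Nat.sub_add_cancel hk0]
  have h2 : ∀ v ∈ e, (∏ w ∈ e.erase v, x w) * x v = ∏ w ∈ e, x w := fun v hv =>
    Finset.prod_erase_mul e x hv
  rw [Finset.sum_congr rfl h1, Finset.sum_congr rfl h2, ← Finset.mul_sum,
    Finset.sum_const, nsmul_eq_mul, G.uniform e he]
  ring

lemma gD_self (hk0 : 0 < k) (x : V → ℝ) :
    gD k x x = (k : ℝ) * ∑ v : V, x v ^ k := by
  rw [gD_apply, Finset.mul_sum]
  refine Finset.sum_congr rfl fun v _ => ?_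
  rw [mul_assoc, ← pow_succ, Nat.sub_add_cancel hk0]

lemma eig_nonneg (G : UHG V k) {lam : ℝ} {x : V → ℝ} (hx : x ≠ 0) (h : G.eigenEq lam x) :
    0 ≤ lam := by
  obtain ⟨w₀, hw₀⟩ : ∃ w, x w ≠ 0 := by
    by_contra hc; push_neg at hc; exact hx (funext hc)
  obtain ⟨v, -, hv⟩ := Finset.exists_max_image Finset.univ (fun v => |x v|)
    ⟨w₀, Finset.mem_univ w₀⟩
  set M := |x v| with hM
  have hMpos : 0 < M := lt_of_lt_of_le (abs_pos.2 hw₀) (hv w₀ (Finset.mem_univ w₀))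
  have heq := h v
  have hbound : |∑ e ∈ G.incEdges v, ∏ w ∈ e.erase v, x w| ≤ (G.deg v : ℝ) * M ^ (k - 1) := by
    calc |∑ e ∈ G.incEdges v, ∏ w ∈ e.erase v, x w|
        ≤ ∑ e ∈ G.incEdges v, |∏ w ∈ e.erase v, x w| := Finset.abs_sum_le_sum_abs _ _
      _ ≤ ∑ _e ∈ G.incEdges v, M ^ (k - 1) := by
          refine Finset.sum_le_sum fun e he => ?_
          rw [Finset.abs_prod]
          have hve : v ∈ e := (Finset.mem_filter.1 he).2
          have hee : e ∈ G.edges := (Finset.mem_filter.1 he).1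
          calc ∏ w ∈ e.erase v, |x w| ≤ ∏ _w ∈ e.erase v, M :=
                Finset.prod_le_prod (fun w _ => abs_nonneg _) (fun w _ => hv w (Finset.mem_univ w))
            _ = M ^ (k - 1) := by
                rw [Finset.prod_const, Finset.card_erase_of_mem hve, G.uniform e hee]
      _ = (G.deg v : ℝ) * M ^ (k - 1) := by
          rw [Finset.sum_const, nsmul_eq_mul]; rfl
  have hLHS : |(lam - (G.deg v : ℝ)) * x v ^ (k - 1)| = |lam - (G.deg v : ℝ)| * M ^ (k - 1) := by
    rw [abs_mul, abs_pow]
  have hineq : |lam - (G.deg v : ℝ)| * M ^ (k - 1) ≤ (G.deg v : ℝ) * M ^ (k - 1) := by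
    rw [← hLHS, heq]; exact hbound
  have hMk : (0 : ℝ) < M ^ (k - 1) := pow_pos hMpos _
  have habs : |lam - (G.deg v : ℝ)| ≤ (G.deg v : ℝ) := le_of_mul_le_mul_right hineq hMk
  have := abs_le.1 habs
  linarith [this.1]

lemma exists_eig [Nonempty V] (G : UHG V k) (hk : Even k) (hk0 : 0 < k) :
    ∃ lam x, x ≠ 0 ∧ G.eigenEq lam x ∧
      ∀ y : V → ℝ, (∑ v, y v ^ k) = 1 → lam ≤ G.Qform y := by
  classical
  set g : (V → ℝ) → ℝ := fun y => ∑ v, y v ^ k with hgdef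
  set Sp : Set (V → ℝ) := {y | g y = 1} with hSpdef
  have hgc : Continuous g := continuous_finset_sum _ fun v _ => (continuous_apply v).pow k
  have hSclosed : IsClosed Sp := isClosed_eq hgc continuous_const
  have hk' : (k : ℝ) ≠ 0 := Nat.cast_ne_zero.2 hk0.ne'
  have hsub : Sp ⊆ Metric.closedBall 0 1 := by
    intro y hy
    rw [Metric.mem_closedBall, dist_zero_right, pi_norm_le_iff_of_nonneg zero_le_one]
    intro v
    have hnn : ∀ w, (0 : ℝ) ≤ y w ^ k := fun w => hk.pow_nonneg _
    have h1 : y v ^ k ≤ 1 := by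
      have h2 := Finset.single_le_sum (f := fun w => y w ^ k) (fun w _ => hnn w)
        (Finset.mem_univ v)
      have h3 : g y = 1 := hy
      rw [hgdef] at h3
      simpa [h3] using h2
    rw [Real.norm_eq_abs]
    by_contra hgt
    push_neg at hgt
    have : (1 : ℝ) < |y v| ^ k := one_lt_pow₀ hgt hk0.ne'
    rw [pow_abs, abs_of_nonneg (hnn v)] at this
    linarith
  have hcomp : IsCompact Sp :=
    (isCompact_closedBall (0 : V → ℝ) 1).of_isClosed_subset hSclosed hsub
  have hne : Sp.Nonempty := by
    refine ⟨Pi.single (Classical.arbitrary V) 1, ?_⟩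
    show (∑ v : V, (Pi.single (Classical.arbitrary V) (1:ℝ) : V → ℝ) v ^ k) = 1
    rw [Finset.sum_eq_single_of_mem (Classical.arbitrary V) (Finset.mem_univ _)
      (fun v _ hne => by simp [Pi.single_eq_of_ne hne, zero_pow hk0.ne'])]
    simp
  have hQc : ContinuousOn G.Qform Sp := by
    refine Continuous.continuousOn ?_
    refine continuous_finset_sum _ fun e _ => Continuous.add ?_ ?_
    · exact continuous_finset_sum _ fun v _ => (continuous_apply v).pow k
    · exact continuous_const.mul (continuous_finset_prod _ fun v _ => continuous_apply v)
  obtain ⟨x₀, hx₀S, hmin⟩ := hcomp.exists_isMinOn hne hQc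
  have hgx₀ : g x₀ = 1 := hx₀S
  have hgx₀' : (∑ v : V, x₀ v ^ k) = 1 := hx₀S
  have hextr : IsLocalExtrOn G.Qform {y | g y = g x₀} x₀ := by
    refine Or.inl ?_
    have hset : {y | g y = g x₀} = Sp := by rw [hSpdef, hgx₀]
    rw [hset]
    exact hmin.localize
  obtain ⟨a, b, hab, hsum⟩ := hextr.exists_multipliers_of_hasStrictFDerivAt_1d
    (hasStrict_g x₀) (hasStrict_Q G x₀)
  have happ : ∀ y, a * gD k x₀ y + b * QD G x₀ y = 0 := by
    intro y
    have h := DFunLike.congr_fun hsum y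
    simpa [smul_eq_mul] using h
  have hx₀ne : x₀ ≠ 0 := by
    intro h0
    rw [h0] at hgx₀'
    simp [zero_pow hk0.ne'] at hgx₀'
  have hgself : gD k x₀ x₀ = (k : ℝ) * 1 := by
    rw [gD_self hk0, hgx₀']
  have hb : b ≠ 0 := by
    intro hb0
    have ha : a ≠ 0 := by
      intro ha0
      exact hab (by rw [ha0, hb0]; rfl)
    have h := happ x₀
    rw [hgself, hb0] at h
    have : a * ((k : ℝ) * 1) = 0 := by linarith
    rcases mul_eq_zero.1 this with h' | h'
    · exact ha h'
    · rw [mul_one] at h'; exact hk' h'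
  set lam := -a / b with hlamdef
  have ha' : a = -(b * lam) := by
    rw [hlamdef]; field_simp
  have hQx₀ : G.Qform x₀ = lam := by
    have h := happ x₀
    rw [hgself, QD_self G hk0, ha'] at h
    have h2 : b * ((k : ℝ) * (G.Qform x₀ - lam)) = 0 := by linear_combination h
    rcases mul_eq_zero.1 h2 with h' | h'
    · exact absurd h' hb
    · rcases mul_eq_zero.1 h' with h'' | h''
      · exact absurd h'' hk'
      · linarith
  refine ⟨lam, x₀, hx₀ne, ?_, ?_⟩
  · intro w
    have h := happ (Pi.single w 1)
    rw [gD_single, QD_single, ha'] at h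
    have h2 : b * ((k : ℝ) * ((lam - (G.deg w : ℝ)) * x₀ w ^ (k - 1)
        - ∑ e ∈ G.incEdges w, ∏ v ∈ e.erase w, x₀ v)) = 0 := by linear_combination -h
    rcases mul_eq_zero.1 h2 with h' | h'
    · exact absurd h' hb
    · rcases mul_eq_zero.1 h' with h'' | h''
      · exact absurd h'' hk'
      · linarith
  · intro y hy
    have hyS : y ∈ Sp := hy
    calc lam = G.Qform x₀ := hQx₀.symm
      _ ≤ G.Qform y := (isMinOn_iff.1 hmin) y hyS

lemma Qform_smul (G : UHG V k) (c : ℝ) (x : V → ℝ) :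
    G.Qform (c • x) = c ^ k * G.Qform x := by
  unfold UHG.Qform
  rw [Finset.mul_sum]
  refine Finset.sum_congr rfl fun e he => ?_
  have h1 : ∑ v ∈ e, (c • x) v ^ k = c ^ k * ∑ v ∈ e, x v ^ k := by
    rw [Finset.mul_sum]
    exact Finset.sum_congr rfl fun v _ => by simp [mul_pow]
  have h2 : ∏ v ∈ e, (c • x) v = c ^ k * ∏ v ∈ e, x v := by
    simp only [Pi.smul_apply, smul_eq_mul]
    rw [Finset.prod_mul_distrib, Finset.prod_const, G.uniform e he]
  rw [h1, h2]; ring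

end Stmt16Aux


/-- Let `G = G₀(u) ⋄ H(u)` be a connected non-odd-bipartite `k`-uniform
hypergraph (`k` even) with `H` odd-bipartite. Then `λ_min(G) ≤ d_{G₀}(u) / ν(H)`. -/
theorem stmt16 {V : Type} [DecidableEq V] [Fintype V] {k : ℕ}
    (hk : Even k) (hk0 : 0 < k) (G G₀ H : UHG V k) (u : V)
    (hcoal : UHG.IsCoalescence G G₀ H u) (hH : H.OddBipartite)
    (hconn : G.Connected) (hnob : ¬ G.OddBipartite) :
    G.lamMin ≤ (G₀.deg u : ℝ) / H.verts.card := by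
  classical
  have : Nonempty V := ⟨u⟩
  obtain ⟨hedges, hdisj, hinter, huG₀, huH⟩ := hcoal
  obtain ⟨U, hU⟩ := hH
  have hk2 : 2 ≤ k := by obtain ⟨m, hm⟩ := hk; omega
  set y : V → ℝ := fun v => if v ∈ H.verts then (if v ∈ U then 1 else -1) else 0 with hy
  have hyk : ∀ v, y v ^ k = if v ∈ H.verts then 1 else 0 := by
    intro v
    by_cases h1 : v ∈ H.verts
    · by_cases h2 : v ∈ U <;> simp [hy, h1, h2, Even.neg_one_pow hk]
    · simp [hy, h1, zero_pow hk0.ne']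
  have hsum : (∑ v : V, y v ^ k) = (H.verts.card : ℝ) := by
    rw [Finset.sum_congr rfl fun v _ => hyk v, Finset.sum_boole]
    rw [Finset.filter_univ_mem H.verts]
  have hcard_pos : 0 < H.verts.card := Finset.card_pos.2 ⟨u, huH⟩
  have hcast : (0 : ℝ) < (H.verts.card : ℝ) := by exact_mod_cast hcard_pos
  have hQy : G.Qform y = (G₀.deg u : ℝ) := by
    unfold UHG.Qform
    rw [hedges, Finset.sum_union hdisj]
    have hHzero : ∀ e ∈ H.edges, ((∑ v ∈ e, y v ^ k) + (k : ℝ) * ∏ v ∈ e, y v) = 0 := by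
      intro e he
      have hsubH : ∀ v ∈ e, v ∈ H.verts := fun v hv =>
        Finset.mem_biUnion.2 ⟨e, he, hv⟩
      have h1 : ∑ v ∈ e, y v ^ k = (k : ℝ) := by
        rw [Finset.sum_congr rfl (fun v hv => by rw [hyk v, if_pos (hsubH v hv)])]
        rw [Finset.sum_const, H.uniform e he, nsmul_eq_mul, mul_one]
      have h2 : ∏ v ∈ e, y v = -1 := by
        have hyv : ∀ v ∈ e, y v = if v ∈ U then 1 else -1 := fun v hv => by
          rw [hy]; simp only [if_pos (hsubH v hv)]
        rw [Finset.prod_congr rfl hyv, Finset.prod_ite, Finset.prod_const, Finset.prod_const,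
          one_pow, one_mul]
        have hodd : Odd (Finset.filter (fun v => ¬ v ∈ U) e).card := by
          have hfi : Finset.filter (fun v => v ∈ U) e = e ∩ U := by
            ext w; simp [Finset.mem_inter, Finset.mem_filter]
          have hcc : (e ∩ U).card + (Finset.filter (fun v => ¬ v ∈ U) e).card = e.card := by
            rw [← hfi]
            simpa using Finset.card_filter_add_card_filter_not
              (s := e) (p := fun v => v ∈ U)
          have hOddc : Odd (e ∩ U).card := hU e he
          have hcardk : e.card = k := H.uniform e he
          obtain ⟨m, hm⟩ := hOddc
          obtain ⟨n, hn⟩ := hk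
          refine ⟨(n - m - 1), ?_⟩
          omega
        exact Odd.neg_one_pow hodd
      rw [h1, h2]; ring
    have hG₀term : ∀ e ∈ G₀.edges,
        ((∑ v ∈ e, y v ^ k) + (k : ℝ) * ∏ v ∈ e, y v) = if u ∈ e then 1 else 0 := by
      intro e he
      have hzero : ∀ v ∈ e, v ≠ u → y v = 0 := by
        intro v hv hne
        have hvG₀ : v ∈ G₀.verts := Finset.mem_biUnion.2 ⟨e, he, hv⟩
        have hvnH : v ∉ H.verts := fun hvH => hne (by
          have h := hinter (Finset.mem_inter.2 ⟨hvG₀, hvH⟩)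
          simpa using h)
        rw [hy]; simp [hvnH]
      have h2 : ∏ v ∈ e, y v = 0 := by
        have hcard : 1 < e.card := by rw [G₀.uniform e he]; omega
        obtain ⟨v, hv, hvne⟩ := Finset.exists_mem_ne hcard u
        exact Finset.prod_eq_zero hv (hzero v hv hvne)
      have h1 : ∑ v ∈ e, y v ^ k = if u ∈ e then 1 else 0 := by
        split_ifs with hu
        · rw [Finset.sum_eq_single_of_mem u hu (fun v hv hne => by
            rw [hzero v hv hne, zero_pow hk0.ne'])]
          rw [hyk u, if_pos huH]
        · refine Finset.sum_eq_zero fun v hv => ?_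
          rw [hzero v hv (fun h => hu (h ▸ hv)), zero_pow hk0.ne']
      rw [h1, h2]
      split_ifs <;> ring
    rw [Finset.sum_congr rfl hG₀term, Finset.sum_eq_zero hHzero, add_zero, Finset.sum_boole]
    rfl
  obtain ⟨lam, x, hxne, heig, hle⟩ := exists_eig G hk hk0
  set c : ℝ := (H.verts.card : ℝ) ^ (-(1 : ℝ) / k) with hc
  have hck : c ^ k = ((H.verts.card : ℝ))⁻¹ := by
    rw [hc, ← Real.rpow_natCast ((H.verts.card : ℝ) ^ (-(1 : ℝ) / k)) k,
      ← Real.rpow_mul (le_of_lt hcast)]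
    have hkk : (-(1 : ℝ) / k) * k = -1 := by
      field_simp
    rw [hkk, Real.rpow_neg_one]
  have hgz : (∑ v : V, (c • y) v ^ k) = 1 := by
    have hterm : ∀ v, (c • y) v ^ k = c ^ k * y v ^ k := fun v => by
      simp [mul_pow]
    rw [Finset.sum_congr rfl fun v _ => hterm v, ← Finset.mul_sum, hsum, hck]
    field_simp
  have hQz : G.Qform (c • y) = (G₀.deg u : ℝ) / (H.verts.card : ℝ) := by
    rw [Qform_smul G c y, hQy, hck, division_def]
    ring
  have hlam : lam ≤ (G₀.deg u : ℝ) / (H.verts.card : ℝ) := by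
    rw [← hQz]; exact hle (c • y) hgz
  have hbdd : BddBelow {lam : ℝ | ∃ x : V → ℝ, x ≠ 0 ∧ G.eigenEq lam x} := by
    refine ⟨0, fun l hl => ?_⟩
    obtain ⟨x', hx', h'⟩ := hl
    exact eig_nonneg G hx' h'
  have hmem : lam ∈ {lam : ℝ | ∃ x : V → ℝ, x ≠ 0 ∧ G.eigenEq lam x} := ⟨x, hxne, heig⟩
  exact le_trans (csInf_le hbdd hmem) hlam
end
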